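/- arXiv:1709.04389 — 3 statements merged into one kernel-verified Lean document; each statement's English description precedes it below -/
import Mathlib

section
/- Let p₁,…,p_K be positive reals summing to 1, let v₁,…,v_K be positive definite symmetric p×p real matrices and s₁,…,s_K be arbitrary p×p real matrices. Define s = Σ_k p_k s_k, v = Σ_k p_k v_k, j_cd = Σ_k p_k s_kᵀ v_k⁻¹ s_k, and j = sᵀ v⁻¹ s. Then j_cd - j is positive semidefinite (i.e., j_cd ⪰ j in the Loewner order). -/
open Matrix Finset

private lemma psd_smul' {n : Type*} [Fintype n] {M : Matrix n n ℝ} (hM : M.PosSemidef) {c : ℝ}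
    (hc : 0 ≤ c) : (c • M).PosSemidef := by
  refine posSemidef_iff_dotProduct_mulVec.mpr ⟨?_, fun x => ?_⟩
  · unfold Matrix.IsHermitian
    rw [conjTranspose_smul, hM.1]
    simp
  · rw [smul_mulVec, dotProduct_smul]
    exact mul_nonneg hc (hM.dotProduct_mulVec_nonneg x)

private lemma psd_sum' {n : Type*} [Fintype n] {ι : Type*} (t : Finset ι) (f : ι → Matrix n n ℝ)
    (h : ∀ i ∈ t, (f i).PosSemidef) : (∑ i ∈ t, f i).PosSemidef := by
  classical
  induction t using Finset.induction with
  | empty => simpa using (Matrix.PosSemidef.zero : (0 : Matrix n n ℝ).PosSemidef)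
  | insert _ _ hnot ih =>
    rename_i a t'
    rw [Finset.sum_insert hnot]
    have h1 := h a (Finset.mem_insert_self a t')
    have h2 := ih fun i hi => h i (Finset.mem_insert_of_mem hi)
    refine PosSemidef.of_dotProduct_mulVec_nonneg (h1.1.add h2.1) fun x => ?_
    rw [add_mulVec, dotProduct_add]
    exact add_nonneg (h1.dotProduct_mulVec_nonneg x) (h2.dotProduct_mulVec_nonneg x)

private lemma sum_mulVec'' {n : Type*} [Fintype n] {ι : Type*} (t : Finset ι)
    (M : ι → Matrix n n ℝ) (x : n → ℝ) : (∑ i ∈ t, M i) *ᵥ x = ∑ i ∈ t, M i *ᵥ x := by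
  ext j
  simp only [Matrix.mulVec, Matrix.sum_apply, dotProduct, Finset.sum_apply, Finset.sum_mul]
  exact Finset.sum_comm

private lemma dotProduct_sum'' {n : Type*} [Fintype n] {ι : Type*} (t : Finset ι)
    (x : n → ℝ) (f : ι → n → ℝ) : x ⬝ᵥ ∑ i ∈ t, f i = ∑ i ∈ t, x ⬝ᵥ f i := by
  simp only [dotProduct, Finset.sum_apply, Finset.mul_sum]
  exact Finset.sum_comm

private lemma sum_fromBlocks' {K p : ℕ} (A B C D : Fin K → Matrix (Fin p) (Fin p) ℝ) :
    ∑ k, fromBlocks (A k) (B k) (C k) (D k) =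
      fromBlocks (∑ k, A k) (∑ k, B k) (∑ k, C k) (∑ k, D k) := by
  ext i j
  rw [Matrix.sum_apply]
  cases i <;> cases j <;>
    simp [fromBlocks, Matrix.sum_apply]

theorem godambe_info_inequality {p K : ℕ}
    (w : Fin K → ℝ) (hw : ∀ k, 0 < w k) (hsum : ∑ k, w k = 1)
    (v s : Fin K → Matrix (Fin p) (Fin p) ℝ)
    (hv : ∀ k, (v k).PosDef) :
    ((∑ k, w k • ((s k)ᵀ * (v k)⁻¹ * s k)) -
      (∑ k, w k • s k)ᵀ * (∑ k, w k • v k)⁻¹ * (∑ k, w k • s k)).PosSemidef := by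
  have hKne : Nonempty (Fin K) := by
    rcases Nat.eq_zero_or_pos K with h | h
    · subst h; simp at hsum
    · exact ⟨⟨0, h⟩⟩
  -- v is positive definite
  have hvpd : (∑ k, w k • v k).PosDef := by
    rw [posDef_iff_dotProduct_mulVec]
    constructor
    · unfold Matrix.IsHermitian
      rw [conjTranspose_sum]
      refine Finset.sum_congr rfl fun k _ => ?_
      rw [conjTranspose_smul, (hv k).1]
      simp
    · intro x hx
      rw [sum_mulVec'', dotProduct_sum'']
      refine Finset.sum_pos (fun k _ => ?_) Finset.univ_nonempty
      rw [smul_mulVec, dotProduct_smul, smul_eq_mul]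
      exact mul_pos (hw k) ((hv k).dotProduct_mulVec_pos hx)
  haveI : Invertible (∑ k, w k • v k) := hvpd.isUnit.invertible
  haveI : ∀ k, Invertible (v k) := fun k => (hv k).isUnit.invertible
  -- each block matrix is PSD
  have hblk : ∀ k : Fin K,
      (fromBlocks (v k) (s k) (s k)ᴴ ((s k)ᴴ * (v k)⁻¹ * s k)).PosSemidef := by
    intro k
    rw [Matrix.PosDef.fromBlocks₁₁ (s k) _ (hv k)]
    simpa using (Matrix.PosSemidef.zero : (0 : Matrix (Fin p) (Fin p) ℝ).PosSemidef)
  -- the weighted sum of blocks is PSD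
  have hsumblk :
      (fromBlocks (∑ k, w k • v k) (∑ k, w k • s k) (∑ k, w k • (s k)ᴴ)
        (∑ k, w k • ((s k)ᴴ * (v k)⁻¹ * s k))).PosSemidef := by
    rw [← sum_fromBlocks']
    have : ∀ k : Fin K, w k • fromBlocks (v k) (s k) (s k)ᴴ ((s k)ᴴ * (v k)⁻¹ * s k) =
        fromBlocks (w k • v k) (w k • s k) (w k • (s k)ᴴ)
          (w k • ((s k)ᴴ * (v k)⁻¹ * s k)) := fun k => Matrix.fromBlocks_smul _ _ _ _ _
    simp_rw [← this]
    exact psd_sum' _ _ fun k _ => psd_smul' (hblk k) (hw k).le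
  have hCT : ∑ k, w k • (s k)ᴴ = (∑ k, w k • s k)ᴴ := by
    rw [conjTranspose_sum]
    refine Finset.sum_congr rfl fun k _ => ?_
    rw [conjTranspose_smul]
    simp
  rw [hCT] at hsumblk
  have := (Matrix.PosDef.fromBlocks₁₁ (∑ k, w k • s k)
    (∑ k, w k • ((s k)ᴴ * (v k)⁻¹ * s k)) hvpd).mp hsumblk
  simpa [Matrix.conjTranspose_eq_transpose_of_trivial] using this
end

section
/- Let A₁, A₂ be real n×p matrices and B₁, B₂ be positive definite symmetric n×n real matrices, and let t ∈ [0,1]. Then (t A₁ + (1-t) A₂)ᵀ (t B₁ + (1-t) B₂)⁻¹ (t A₁ + (1-t) A₂) ⪯ t A₁ᵀ B₁⁻¹ A₁ + (1-t) A₂ᵀ B₂⁻¹ A₂ in the Loewner order. -/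
open Matrix

private lemma smul_posSemidef {m : Type*} [Fintype m] {c : ℝ} (hc : 0 ≤ c)
    {A : Matrix m m ℝ} (hA : A.PosSemidef) : (c • A).PosSemidef := by
  exact hA.smul hc

private lemma smul_posDef {m : Type*} [Fintype m] {c : ℝ} (hc : 0 < c)
    {A : Matrix m m ℝ} (hA : A.PosDef) : (c • A).PosDef := by
  exact hA.smul hc

theorem sandwich_jointly_convex {n p : ℕ}
    (A₁ A₂ : Matrix (Fin n) (Fin p) ℝ) (B₁ B₂ : Matrix (Fin n) (Fin n) ℝ)
    (hB₁ : B₁.PosDef) (hB₂ : B₂.PosDef)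
    (t : ℝ) (ht : t ∈ Set.Icc (0 : ℝ) 1) :
    ((t • (A₁ᵀ * B₁⁻¹ * A₁) + (1 - t) • (A₂ᵀ * B₂⁻¹ * A₂)) -
      (t • A₁ + (1 - t) • A₂)ᵀ * (t • B₁ + (1 - t) • B₂)⁻¹ *
        (t • A₁ + (1 - t) • A₂)).PosSemidef := by
  obtain ⟨ht0, ht1⟩ := ht
  have ht1' : (0:ℝ) ≤ 1 - t := by linarith
  -- the combined block is positive definite
  have hB : (t • B₁ + (1 - t) • B₂).PosDef := by
    rcases lt_or_eq_of_le ht0 with h | h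
    · exact (smul_posDef h hB₁).add_posSemidef (smul_posSemidef ht1' hB₂.posSemidef)
    · have h1 : (0:ℝ) < 1 - t := by linarith
      exact Matrix.PosDef.posSemidef_add (smul_posSemidef ht0 hB₁.posSemidef)
        (smul_posDef h1 hB₂)
  haveI : Invertible B₁ := hB₁.isUnit.invertible
  haveI : Invertible B₂ := hB₂.isUnit.invertible
  haveI : Invertible (t • B₁ + (1 - t) • B₂) := hB.isUnit.invertible
  have key : ∀ (A : Matrix (Fin n) (Fin p) ℝ) (B : Matrix (Fin n) (Fin n) ℝ)
      (hB' : B.PosDef) [Invertible B],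
      (fromBlocks B A Aᴴ (Aᴴ * B⁻¹ * A)).PosSemidef := by
    intro A B hB' _
    rw [Matrix.PosDef.fromBlocks₁₁ A _ hB']
    simpa using Matrix.PosSemidef.zero
  have h₁ := key A₁ B₁ hB₁
  have h₂ := key A₂ B₂ hB₂
  have hsum := (smul_posSemidef ht0 h₁).add (smul_posSemidef ht1' h₂)
  rw [Matrix.fromBlocks_smul, Matrix.fromBlocks_smul, Matrix.fromBlocks_add] at hsum
  have hAH : (t • A₁ + (1 - t) • A₂)ᴴ = t • A₁ᴴ + (1 - t) • A₂ᴴ := by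
    simp [Matrix.conjTranspose_add, Matrix.conjTranspose_smul]
  have := (Matrix.PosDef.fromBlocks₁₁ (t • A₁ + (1 - t) • A₂)
      (t • (A₁ᴴ * B₁⁻¹ * A₁) + (1 - t) • (A₂ᴴ * B₂⁻¹ * A₂)) hB).mp (by
    rw [hAH]; exact hsum)
  simpa [Matrix.conjTranspose_eq_transpose_of_trivial] using this
end

section
/- Let G be a real q×p matrix of rank p (q ≥ p), V a positive definite symmetric q×q matrix, and C a symmetric q×q matrix such that Gᵀ C G is invertible. Then the sandwich matrix (Gᵀ C G)⁻¹ (Gᵀ C V C G) (Gᵀ C G)⁻¹ ⪰ (Gᵀ V⁻¹ G)⁻¹ in the Loewner order, with equality when C = V⁻¹. -/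
open Matrix

theorem gmm_optimal_weighting {q p : ℕ} (hqp : p ≤ q)
    (G : Matrix (Fin q) (Fin p) ℝ) (hG : G.rank = p)
    (V : Matrix (Fin q) (Fin q) ℝ) (hV : V.PosDef)
    (C : Matrix (Fin q) (Fin q) ℝ) (hC : C.IsSymm)
    (hinv : IsUnit (Gᵀ * C * G)) :
    (((Gᵀ * C * G)⁻¹ * (Gᵀ * C * V * C * G) * (Gᵀ * C * G)⁻¹) -
        (Gᵀ * V⁻¹ * G)⁻¹).PosSemidef ∧
    (C = V⁻¹ →
      (Gᵀ * C * G)⁻¹ * (Gᵀ * C * V * C * G) * (Gᵀ * C * G)⁻¹ =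
        (Gᵀ * V⁻¹ * G)⁻¹) := by
  -- G is injective as a linear map
  have hker : LinearMap.ker G.mulVecLin = ⊥ := by
    have h1 := LinearMap.finrank_range_add_finrank_ker G.mulVecLin
    rw [show Module.finrank ℝ ↥(LinearMap.range G.mulVecLin) = G.rank from rfl, hG,
      Module.finrank_pi] at h1
    simp only [Fintype.card_fin] at h1
    have : Module.finrank ℝ (LinearMap.ker G.mulVecLin) = 0 := by omega
    exact Submodule.finrank_eq_zero.mp this
  have hGinj : ∀ x, G *ᵥ x = 0 → x = 0 := Matrix.ker_mulVecLin_eq_bot_iff.mp hker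
  -- V inverse facts
  have hVdet : IsUnit V.det := hV.det_pos.ne'.isUnit
  have hVinv : (V⁻¹).PosDef := hV.inv
  -- U = Gᵀ V⁻¹ G is positive definite
  set U : Matrix (Fin p) (Fin p) ℝ := Gᵀ * V⁻¹ * G with hU_def
  have hU : U.PosDef := by
    refine Matrix.PosDef.of_dotProduct_mulVec_pos ?_ ?_
    · have h := Matrix.isHermitian_conjTranspose_mul_mul G hVinv.1
      simpa using h
    · intro x hx
      have hGx : G *ᵥ x ≠ 0 := fun h => hx (hGinj x h)
      have := hVinv.dotProduct_mulVec_pos hGx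
      simpa only [star_mulVec, dotProduct_mulVec, vecMul_vecMul, hU_def, conjTranspose_eq_transpose_of_trivial] using this
  have hUdet : IsUnit U.det := hU.det_pos.ne'.isUnit
  set W : Matrix (Fin p) (Fin p) ℝ := Gᵀ * C * G with hW_def
  have hWdet : IsUnit W.det := (Matrix.isUnit_iff_isUnit_det W).mp hinv
  -- symmetry facts
  have hVsymm : Vᵀ = V := hV.1
  have hVisymm : (V⁻¹)ᵀ = V⁻¹ := hVinv.1
  have hWsymm : Wᵀ = W := by
    rw [hW_def]
    simp [Matrix.transpose_mul, Matrix.mul_assoc, hC.eq]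
  have hUsymm : Uᵀ = U := hU.1
  have hWisymm : (W⁻¹)ᵀ = W⁻¹ := by rw [Matrix.transpose_nonsing_inv, hWsymm]
  have hUisymm : (U⁻¹)ᵀ = U⁻¹ := by rw [Matrix.transpose_nonsing_inv, hUsymm]
  -- basic inverse identities
  have hWW : W⁻¹ * W = 1 := Matrix.nonsing_inv_mul W hWdet
  have hWW' : W * W⁻¹ = 1 := Matrix.mul_nonsing_inv W hWdet
  have hUU : U⁻¹ * U = 1 := Matrix.nonsing_inv_mul U hUdet
  have hUU' : U * U⁻¹ = 1 := Matrix.mul_nonsing_inv U hUdet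
  have hVV : V * V⁻¹ = 1 := Matrix.mul_nonsing_inv V hVdet
  have hVV' : V⁻¹ * V = 1 := Matrix.nonsing_inv_mul V hVdet
  set A : Matrix (Fin p) (Fin q) ℝ := W⁻¹ * Gᵀ * C with hA_def
  set B : Matrix (Fin p) (Fin q) ℝ := U⁻¹ * Gᵀ * V⁻¹ with hB_def
  have hAT : Aᵀ = C * G * W⁻¹ := by
    rw [hA_def]
    simp [Matrix.transpose_mul, hC.eq, hWisymm, Matrix.mul_assoc]
  have hBT : Bᵀ = V⁻¹ * G * U⁻¹ := by
    rw [hB_def]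
    simp [Matrix.transpose_mul, hVisymm, hUisymm, Matrix.mul_assoc]
  -- the four products
  have hAVA : A * V * Aᵀ = W⁻¹ * (Gᵀ * C * V * C * G) * W⁻¹ := by
    rw [hAT, hA_def]
    simp only [Matrix.mul_assoc]
  have hAVB : A * V * Bᵀ = U⁻¹ := by
    rw [hBT, hA_def]
    calc W⁻¹ * Gᵀ * C * V * (V⁻¹ * G * U⁻¹)
        = W⁻¹ * (Gᵀ * C * ((V * V⁻¹) * G)) * U⁻¹ := by
          simp only [Matrix.mul_assoc]
      _ = W⁻¹ * W * U⁻¹ := by rw [hVV, Matrix.one_mul, hW_def, Matrix.mul_assoc]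
      _ = U⁻¹ := by rw [hWW, Matrix.one_mul]
  have hBVA : B * V * Aᵀ = U⁻¹ := by
    rw [hAT, hB_def]
    calc U⁻¹ * Gᵀ * V⁻¹ * V * (C * G * W⁻¹)
        = U⁻¹ * (Gᵀ * ((V⁻¹ * V) * (C * G))) * W⁻¹ := by
          simp only [Matrix.mul_assoc]
      _ = U⁻¹ * W * W⁻¹ := by
          rw [hVV', Matrix.one_mul, hW_def]; simp only [Matrix.mul_assoc]
      _ = U⁻¹ := by rw [Matrix.mul_assoc, hWW', Matrix.mul_one]
  have hBVB : B * V * Bᵀ = U⁻¹ := by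
    rw [hBT, hB_def]
    calc U⁻¹ * Gᵀ * V⁻¹ * V * (V⁻¹ * G * U⁻¹)
        = U⁻¹ * (Gᵀ * (V⁻¹ * ((V * V⁻¹) * G))) * U⁻¹ := by
          simp only [Matrix.mul_assoc]
      _ = U⁻¹ * U * U⁻¹ := by
          rw [hVV, Matrix.one_mul, hU_def]; simp only [Matrix.mul_assoc]
      _ = U⁻¹ := by rw [hUU, Matrix.one_mul]
  have hkey : (A - B) * V * (A - B)ᵀ =
      W⁻¹ * (Gᵀ * C * V * C * G) * W⁻¹ - U⁻¹ := by
    simp only [Matrix.transpose_sub, Matrix.sub_mul, Matrix.mul_sub,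
      hAVA, hAVB, hBVA, hBVB]
    abel
  constructor
  · have hpsd := hV.posSemidef.mul_mul_conjTranspose_same (A - B)
    rw [show (A - B)ᴴ = (A - B)ᵀ from rfl, hkey] at hpsd
    exact hpsd
  · intro hCV
    subst hCV
    have hS : Gᵀ * V⁻¹ * V * V⁻¹ * G = U := by
      rw [Matrix.mul_assoc (Gᵀ * V⁻¹) V V⁻¹, hVV, Matrix.mul_one, hU_def]
    calc W⁻¹ * (Gᵀ * V⁻¹ * V * V⁻¹ * G) * W⁻¹
        = W⁻¹ * U * W⁻¹ := by rw [hS]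
      _ = U⁻¹ := by
          have hWU : W = U := by rw [hW_def, hU_def]
          rw [hWU, hUU, Matrix.one_mul]
end
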